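/- Let G be a graph, k ≥ 1, q ∈ {1,2}, and let G' be obtained from G by adding a new vertex v adjacent to every vertex of G, together with k+q+2 new pendant vertices v₁, ..., v_{k+q+2} each adjacent only to v. Then G has a set S of at most k vertices such that G − S is properly q-colorable if and only if G' has a set S' of at most k vertices such that G' − S' admits a cd-coloring with at most q+1 colors. -/

import Mathlib

variable {V : Type*}

/-- A proper coloring with at most `q` colors exists. -/
def ProperColorable {W : Type*} (G : SimpleGraph W) (q : ℕ) : Prop :=
  ∃ c : W → Fin q, ∀ a b, G.Adj a b → c a ≠ c b

/-- A cd-coloring with at most `q` colors exists: a proper coloring in which every nonempty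
color class is contained in the closed neighbourhood of some vertex. -/
def CDColorable {W : Type*} (G : SimpleGraph W) (q : ℕ) : Prop :=
  ∃ c : W → Fin q, (∀ a b, G.Adj a b → c a ≠ c b) ∧
    ∀ i : Fin q, (∃ v, c v = i) → ∃ y, ∀ v, c v = i → G.Adj y v ∨ v = y

/-- The graph `G'` obtained from `G` by adding a universal vertex `v` (the `Sum.inr (Sum.inl _)`
vertex) and `k + q + 2` pendant vertices adjacent only to `v`. -/
def apexPendant (G : SimpleGraph V) (k q : ℕ) :
    SimpleGraph (V ⊕ (Unit ⊕ Fin (k + q + 2))) where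
  Adj a b :=
    match a, b with
    | Sum.inl a, Sum.inl b => G.Adj a b
    | Sum.inl _, Sum.inr (Sum.inl _) => True
    | Sum.inr (Sum.inl _), Sum.inl _ => True
    | Sum.inr (Sum.inl _), Sum.inr (Sum.inr _) => True
    | Sum.inr (Sum.inr _), Sum.inr (Sum.inl _) => True
    | _, _ => False
  symm := by
    constructor
    rintro (a | (i | i)) (b | (j | j)) h
    all_goals first | exact h.symm | exact h | trivial
  loopless := by
    constructor
    rintro (a | (i | i)) h
    · exact G.irrefl h
    · exact h
    · exact h

/-- `G` has at most `k` vertices whose deletion leaves a properly `q`-colorable graph iff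
`G'` has at most `k` vertices whose deletion leaves a `(q+1)`-cd-colorable graph. -/
theorem stmt13 [Fintype V] [DecidableEq V] (G : SimpleGraph V) (k q : ℕ)
    (hk : 1 ≤ k) (hq : q = 1 ∨ q = 2) :
    (∃ S : Finset V, S.card ≤ k ∧
        ProperColorable (G.induce {w : V | w ∉ S}) q) ↔
      (∃ S' : Finset (V ⊕ (Unit ⊕ Fin (k + q + 2))), S'.card ≤ k ∧
        CDColorable ((apexPendant G k q).induce {w | w ∉ S'}) (q + 1)) := by
  classical
  have hq1 : 1 ≤ q := by rcases hq with h | h <;> omega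
  constructor
  · rintro ⟨S, hS, c, hc⟩
    refine ⟨S.image Sum.inl, (Finset.card_image_le).trans hS, ?_⟩
    have c0 : V → Fin q := fun a => if h : a ∉ S then c ⟨a, h⟩ else ⟨0, by omega⟩
    refine ⟨fun w => match w with
      | ⟨Sum.inl a, _⟩ => Fin.castSucc (if h : a ∉ S then c ⟨a, h⟩ else ⟨0, by omega⟩)
      | ⟨Sum.inr (Sum.inl _), _⟩ => Fin.last q
      | ⟨Sum.inr (Sum.inr _), _⟩ => ⟨0, by omega⟩, ?_, ?_⟩
    · rintro ⟨(a | u | i), ha⟩ ⟨(b | u' | i'), hb⟩ hadj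
      · -- both in V
        have ha' : a ∉ S := fun h => ha (Finset.mem_image_of_mem _ h)
        have hb' : b ∉ S := fun h => hb (Finset.mem_image_of_mem _ h)
        have hadj' : G.Adj a b := hadj
        simp only [dif_pos ha', dif_pos hb']
        intro h
        exact hc ⟨a, ha'⟩ ⟨b, hb'⟩ hadj' (Fin.castSucc_injective _ h)
      · -- V vs apex
        intro h
        exact absurd h (Fin.castSucc_lt_last _).ne
      · exact absurd hadj (by simp [apexPendant])
      · intro h
        exact absurd h.symm (Fin.castSucc_lt_last _).ne
      · exact absurd hadj (by simp [apexPendant])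
      · intro h
        have h2 : q = 0 := congrArg Fin.val h
        omega
      · exact absurd hadj (by simp [apexPendant])
      · intro h
        have h2 : q = 0 := (congrArg Fin.val h).symm
        omega
      · exact absurd hadj (by simp [apexPendant])
    · intro i _
      have hv : (Sum.inr (Sum.inl ()) : V ⊕ (Unit ⊕ Fin (k + q + 2))) ∈
          {w | w ∉ S.image Sum.inl} := by simp
      refine ⟨⟨Sum.inr (Sum.inl ()), hv⟩, ?_⟩
      rintro ⟨(a | u | j), hw⟩ _
      · left; trivial
      · right; rfl
      · left; trivial
  · rintro ⟨S', hS', c, hc, hdom⟩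
    -- at least q+2 pendants survive
    have hP : (Finset.univ.filter
        (fun j : Fin (k + q + 2) => Sum.inr (Sum.inr j) ∉ S')).card ≥ q + 2 := by
      have hQ : (Finset.univ.filter
          (fun j : Fin (k + q + 2) => Sum.inr (Sum.inr j) ∈ S')).card ≤ k := by
        refine le_trans (Finset.card_le_card_of_injOn
          (fun j => Sum.inr (Sum.inr j)) ?_ ?_) hS'
        · intro j hj; exact (Finset.mem_filter.mp hj).2
        · intro j _ j' _ h
          exact Sum.inr_injective (Sum.inr_injective h)
      have := Finset.card_filter_add_card_filter_not
        (s := (Finset.univ : Finset (Fin (k + q + 2))))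
        (p := fun j => Sum.inr (Sum.inr j) ∈ S')
      simp only [Finset.card_univ, Fintype.card_fin] at this
      omega
    -- the apex survives
    have hvtx : (Sum.inr (Sum.inl ()) : V ⊕ (Unit ⊕ Fin (k + q + 2))) ∉ S' := by
      by_contra hv
      -- two surviving pendants share a color
      obtain ⟨j1, hj1, j2, hj2, hne, heq⟩ :=
        Finset.exists_ne_map_eq_of_card_lt_of_maps_to
          (s := Finset.univ.filter
            (fun j : Fin (k + q + 2) => Sum.inr (Sum.inr j) ∉ S'))
          (t := (Finset.univ : Finset (Fin (q + 1))))
          (by simp; omega)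
          (f := fun j => if h : Sum.inr (Sum.inr j) ∉ S'
            then c ⟨Sum.inr (Sum.inr j), h⟩ else ⟨0, by omega⟩)
          (fun _ _ => Finset.mem_univ _)
      have hj1' := (Finset.mem_filter.mp hj1).2
      have hj2' := (Finset.mem_filter.mp hj2).2
      rw [dif_pos hj1', dif_pos hj2'] at heq
      obtain ⟨y, hy⟩ := hdom (c ⟨Sum.inr (Sum.inr j1), hj1'⟩) ⟨_, rfl⟩
      have h1 := hy ⟨Sum.inr (Sum.inr j1), hj1'⟩ rfl
      have h2 := hy ⟨Sum.inr (Sum.inr j2), hj2'⟩ heq.symm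
      -- y can't be adjacent to a pendant (apex is deleted)
      have hnadj : ∀ (j : Fin (k + q + 2)) (hj : Sum.inr (Sum.inr j) ∉ S'),
          ¬ ((apexPendant G k q).induce {w | w ∉ S'}).Adj y ⟨Sum.inr (Sum.inr j), hj⟩ := by
        rintro j hj hadj
        obtain ⟨(a | u | j'), hyv⟩ := y
        · exact hadj
        · exact hyv hv
        · exact hadj
      have e1 : (⟨Sum.inr (Sum.inr j1), hj1'⟩ :
          {w : V ⊕ (Unit ⊕ Fin (k + q + 2)) // w ∈ {w | w ∉ S'}}) = y :=
        (h1.resolve_left (hnadj j1 hj1'))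
      have e2 : (⟨Sum.inr (Sum.inr j2), hj2'⟩ :
          {w : V ⊕ (Unit ⊕ Fin (k + q + 2)) // w ∈ {w | w ∉ S'}}) = y :=
        (h2.resolve_left (hnadj j2 hj2'))
      apply hne
      have := e1.trans e2.symm
      have := congrArg Subtype.val this
      exact Sum.inr_injective (Sum.inr_injective this)
    -- color of the apex
    set i₀ : Fin (q + 1) := c ⟨Sum.inr (Sum.inl ()), hvtx⟩ with hi₀
    refine ⟨Finset.univ.filter (fun a : V => Sum.inl a ∈ S'), ?_, ?_⟩
    · refine le_trans (Finset.card_le_card_of_injOn (fun a => Sum.inl a) ?_ ?_) hS'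
      · intro a ha; exact (Finset.mem_filter.mp ha).2
      · intro a _ a' _ h; exact Sum.inl_injective h
    · -- every surviving V-vertex has color ≠ i₀
      have hne : ∀ (a : V) (ha : Sum.inl a ∉ S'),
          c ⟨Sum.inl a, ha⟩ ≠ i₀ := by
        intro a ha
        exact hc ⟨Sum.inl a, ha⟩ ⟨Sum.inr (Sum.inl ()), hvtx⟩ trivial
      refine ⟨fun a =>
        if h : Sum.inl a.val ∉ S' then
          (if hlt : (c ⟨Sum.inl a.val, h⟩).val < i₀.val then
             ⟨(c ⟨Sum.inl a.val, h⟩).val, by have := i₀.isLt; omega⟩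
           else ⟨(c ⟨Sum.inl a.val, h⟩).val - 1, by
             have := hne a.val h
             have hv2 : (c ⟨Sum.inl a.val, h⟩).val ≠ i₀.val := fun hh => this (Fin.ext hh)
             have := (c ⟨Sum.inl a.val, h⟩).isLt
             omega⟩)
        else ⟨0, by omega⟩, ?_⟩
      rintro ⟨a, ha⟩ ⟨b, hb⟩ hadj
      have ha' : Sum.inl a ∉ S' := by simpa using fun h => ha (by simp [h])
      have hb' : Sum.inl b ∉ S' := by simpa using fun h => hb (by simp [h])
      have hadj' : (apexPendant G k q).Adj (Sum.inl a) (Sum.inl b) := hadj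
      have hcc : c ⟨Sum.inl a, ha'⟩ ≠ c ⟨Sum.inl b, hb'⟩ :=
        hc ⟨Sum.inl a, ha'⟩ ⟨Sum.inl b, hb'⟩ hadj'
      have hna := hne a ha'
      have hnb := hne b hb'
      simp only [dif_pos ha', dif_pos hb']
      intro h
      apply hcc
      have hva : (c ⟨Sum.inl a, ha'⟩).val ≠ i₀.val := fun hh => hna (Fin.ext hh)
      have hvb : (c ⟨Sum.inl b, hb'⟩).val ≠ i₀.val := fun hh => hnb (Fin.ext hh)
      have hia := i₀.isLt
      have hba := (c ⟨Sum.inl a, ha'⟩).isLt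
      have hbb := (c ⟨Sum.inl b, hb'⟩).isLt
      apply Fin.ext
      split_ifs at h with t1 t2 t2 <;>
        (rw [Fin.mk.injEq] at h; omega)
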